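/- Let C₁ and C₂ be closed affine subsets of X with C₂ ⊆ C₁ and C₂ ∩ int(dom φ) ≠ ∅, and let x ∈ int(dom φ). Then P_{C₂}(x) = P_{C₂}(P_{C₁}(x)) and D_{C₂}(P_{C₁}(x)) + D_{C₁}(x) = D_{C₂}(x). -/

import Mathlib

open Set Filter Topology MeasureTheory ProbabilityTheory
open scoped InnerProductSpace ENNReal Classical

noncomputable section

/-- A Legendre function on a Euclidean space `X`, represented by its (finite) values `f` on its
effective domain `dom`, together with the data of its Fenchel conjugate (`conj` on `domConj`)
and the gradients of both. -/
structure LegendreFn (X : Type*) [NormedAddCommGroup X] [InnerProductSpace ℝ X]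
    [FiniteDimensional ℝ X] where
  /-- the values of `φ` on its domain -/
  f : X → ℝ
  /-- the effective domain of `φ` (`φ = +∞` outside of it) -/
  dom : Set X
  /-- the values of the Fenchel conjugate `φ*` on its domain -/
  conj : X → ℝ
  /-- the effective domain of `φ*` -/
  domConj : Set X
  /-- the gradient of `φ` (meaningful on `interior dom`) -/
  grad : X → X
  /-- the gradient of `φ*` (meaningful on `interior domConj`) -/
  gradConj : X → X
  dom_nonempty : dom.Nonempty
  int_dom_nonempty : (interior dom).Nonempty
  dom_convex : Convex ℝ dom
  convexOn : ConvexOn ℝ dom f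
  /-- `φ` is closed: the epigraph of the extended function is closed -/
  closedEpi : IsClosed {p : X × ℝ | p.1 ∈ dom ∧ f p.1 ≤ p.2}
  /-- essential smoothness, part 1: differentiability on the interior of the domain -/
  hasGrad : ∀ x ∈ interior dom, HasGradientAt f (grad x) x
  /-- essential smoothness, part 2: the gradient blows up at the boundary -/
  grad_blowup : ∀ (u : ℕ → X) (x : X), (∀ n, u n ∈ interior dom) → x ∈ frontier dom →
      Tendsto u atTop (nhds x) → Tendsto (fun n => ‖grad (u n)‖) atTop atTop
  /-- `domConj` is the set where the conjugate supremum is finite -/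
  domConj_spec : ∀ y : X, y ∈ domConj ↔ BddAbove ((fun x => ⟪x, y⟫_ℝ - f x) '' dom)
  /-- `conj` is the Fenchel conjugate of `φ` -/
  conj_spec : ∀ y ∈ domConj, IsLUB ((fun x => ⟪x, y⟫_ℝ - f x) '' dom) (conj y)
  int_domConj_nonempty : (interior domConj).Nonempty
  /-- essential strict convexity: `φ` is strictly convex on every convex subset of `dom ∂φ` -/
  strict : ∀ s : Set X,
      s ⊆ {x ∈ dom | ∃ v : X, ∀ z ∈ dom, f x + ⟪v, z - x⟫_ℝ ≤ f z} →
      Convex ℝ s → StrictConvexOn ℝ s f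
  hasGradConj : ∀ y ∈ interior domConj, HasGradientAt conj (gradConj y) y
  /-- Bregman projections onto closed convex sets meeting `interior dom` exist
  (Bauschke–Borwein). -/
  proj_exists : ∀ S : Set X, IsClosed S → Convex ℝ S → (S ∩ interior dom).Nonempty →
      ∀ x ∈ interior dom, ∃ p ∈ S ∩ interior dom, ∀ z ∈ S ∩ dom,
        f p - ⟪p, grad x⟫_ℝ ≤ f z - ⟪z, grad x⟫_ℝ

namespace LegendreFn

variable {X : Type*} [NormedAddCommGroup X] [InnerProductSpace ℝ X] [FiniteDimensional ℝ X]

/-- The Bregman distance `D_φ(x, y)`; the formula is meaningful for `x ∈ dom φ` and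
`y ∈ int (dom φ)`. -/
def breg (L : LegendreFn X) (x y : X) : ℝ :=
  L.f x - L.f y - ⟪x - y, L.grad y⟫_ℝ

/-- The Bregman distance from the point `y` to the set `S`: `D_S(y) = inf_{z ∈ S} D_φ(z, y)`. -/
def distTo (L : LegendreFn X) (S : Set X) (y : X) : ℝ :=
  sInf ((fun z => L.breg z y) '' (S ∩ L.dom))

/-- `p` is the Bregman projection of `x` onto `S`. -/
def IsBregProj (L : LegendreFn X) (S : Set X) (x p : X) : Prop :=
  p ∈ S ∧ p ∈ interior L.dom ∧ ∀ z ∈ S ∩ L.dom, L.breg p x ≤ L.breg z x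

/-- The Bregman projection of `x` onto `S` (as a function; well defined whenever the Bregman
projection exists, since it is then unique). -/
def proj (L : LegendreFn X) (S : Set X) (x : X) : X :=
  @Classical.epsilon X ⟨0⟩ (L.IsBregProj S x)

end LegendreFn

/-- Condition SC (sequential consistency). -/
def SCcond {X : Type*} [NormedAddCommGroup X] [InnerProductSpace ℝ X] [FiniteDimensional ℝ X]
    (L : LegendreFn X) : Prop :=
  ∀ z y : ℕ → X, (∀ n, z n ∈ interior L.dom) → (∀ n, y n ∈ interior L.dom) →
    Bornology.IsBounded (Set.range z) → Bornology.IsBounded (Set.range y) →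
    Tendsto (fun n => L.breg (z n) (y n)) atTop (nhds 0) →
    Tendsto (fun n => z n - y n) atTop (nhds 0)

/-- Assumption H0: `C ≠ X`, `dom φ*` is open and `int (dom φ) ∩ C ≠ ∅`
(`φ` being Legendre is part of the `LegendreFn` structure). -/
def H0 {X : Type*} [NormedAddCommGroup X] [InnerProductSpace ℝ X] [FiniteDimensional ℝ X]
    (L : LegendreFn X) (C : Set X) : Prop :=
  C ≠ Set.univ ∧ IsOpen L.domConj ∧ (interior L.dom ∩ C).Nonempty

/-- `G` is the Moore–Penrose pseudoinverse of `T`. -/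
def IsMPInv {E F : Type*} [NormedAddCommGroup E] [InnerProductSpace ℝ E] [FiniteDimensional ℝ E]
    [NormedAddCommGroup F] [InnerProductSpace ℝ F] [FiniteDimensional ℝ F]
    (T : E →L[ℝ] F) (G : F →L[ℝ] E) : Prop :=
  T ∘L G ∘L T = T ∧ G ∘L T ∘L G = G ∧
    ContinuousLinearMap.adjoint (T ∘L G) = T ∘L G ∧
    ContinuousLinearMap.adjoint (G ∘L T) = G ∘L T

/-- The orthogonal projection onto a subspace, as a map `X →L[ℝ] X`. -/
def projL {X : Type*} [NormedAddCommGroup X] [InnerProductSpace ℝ X] [FiniteDimensional ℝ X]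
    (K : Submodule ℝ X) : X →L[ℝ] X :=
  K.subtypeL.comp K.orthogonalProjectionOnto

/-- The set `K(x)` of points having the same Bregman projection onto `C` as `x` and not larger
Bregman distance to `C`. -/
def Kset {X : Type*} [NormedAddCommGroup X] [InnerProductSpace ℝ X] [FiniteDimensional ℝ X]
    (L : LegendreFn X) (C : Set X) (x : X) : Set X :=
  {z | z ∈ interior L.dom ∧ L.proj C z = L.proj C x ∧ L.distTo C z ≤ L.distTo C x}

section Affine

variable {X Y : Type*} [NormedAddCommGroup X] [InnerProductSpace ℝ X] [FiniteDimensional ℝ X]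
  [NormedAddCommGroup Y] [InnerProductSpace ℝ Y] [FiniteDimensional ℝ Y]
  {I : Type*} {Yf : I → Type*} [∀ i, NormedAddCommGroup (Yf i)]
  [∀ i, InnerProductSpace ℝ (Yf i)] [∀ i, FiniteDimensional ℝ (Yf i)]

/-- Assumption H2₁: `φ*` is twice differentiable (with second derivative `hess`), and for all
`x ∈ int (dom φ) ∩ C`, `A ∘ ∇²φ*(∇φ(x)) ≠ 0` and
`sup_i ‖Aᵢ* (Aᵢ ∇²φ*(∇φ(x)) Aᵢ*)† Aᵢ‖ < ∞`. -/
def H21 (L : LegendreFn X) (A : ∀ i, X →L[ℝ] Yf i) (AY : X →L[ℝ] Y) (C : Set X)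
    (hess : X → X →L[ℝ] X) : Prop :=
  (∀ y ∈ interior L.domConj, HasFDerivAt L.gradConj (hess y) y) ∧
  ∀ x ∈ interior L.dom ∩ C,
    AY ∘L hess (L.grad x) ≠ 0 ∧
    ∃ M : ℝ, ∀ (i : I) (G : Yf i →L[ℝ] Yf i),
      IsMPInv (A i ∘L hess (L.grad x) ∘L ContinuousLinearMap.adjoint (A i)) G →
      ‖ContinuousLinearMap.adjoint (A i) ∘L G ∘L A i‖ ≤ M

/-- The orthogonal projection `Q_i(x)` onto `range (H(x) Aᵢ*)`, where `H(x)` (here `Hrt x`) is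
the positive square root of `∇²φ*(∇φ(x))`. -/
def Qproj (A : ∀ i, X →L[ℝ] Yf i) (Hrt : X → X →L[ℝ] X) (i : I) (x : X) : X →L[ℝ] X :=
  projL (LinearMap.range ((Hrt x ∘L ContinuousLinearMap.adjoint (A i)) : Yf i →ₗ[ℝ] X))

/-- The subspace `V(x) = range (H(x) A*)`. -/
def Vsub (AY : X →L[ℝ] Y) (Hrt : X → X →L[ℝ] X) (x : X) : Submodule ℝ X :=
  LinearMap.range ((Hrt x ∘L ContinuousLinearMap.adjoint AY) : Y →ₗ[ℝ] X)

/-- `γ_𝒞(x) = inf_{v ∈ V(x) \ {0}} sup_i ‖Q_i(x) v‖² / ‖v‖²`. -/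
def gammaC (A : ∀ i, X →L[ℝ] Yf i) (AY : X →L[ℝ] Y) (Hrt : X → X →L[ℝ] X) (x : X) : ℝ :=
  ⨅ v : {v : X // v ∈ Vsub AY Hrt x ∧ v ≠ 0},
    ⨆ i : I, ‖Qproj A Hrt i x v.1‖ ^ 2 / ‖v.1‖ ^ 2

/-- `σ_𝒞(x)`, the (deterministic, greedy) contraction factor. -/
def sigmaC (L : LegendreFn X) (Cs : I → Set X) (C : Set X) (γ : X → ℝ) (x : X) : ℝ :=
  if x ∈ C then 1 - γ x
  else ⨆ z : ↥(Kset L C x \ C), ⨅ i : I, L.distTo C (L.proj (Cs i) z) / L.distTo C z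

end Affine

section Stochastic

variable {X Y : Type*} [NormedAddCommGroup X] [InnerProductSpace ℝ X] [FiniteDimensional ℝ X]
  [NormedAddCommGroup Y] [InnerProductSpace ℝ Y] [FiniteDimensional ℝ Y]
  {I : Type*} {Yf : I → Type*} [∀ i, NormedAddCommGroup (Yf i)]
  [∀ i, InnerProductSpace ℝ (Yf i)] [∀ i, FiniteDimensional ℝ (Yf i)]
  {Ω : Type*} [MeasurableSpace Ω]

/-- Assumption H2₂ (stochastic version of H2₁, with an essential supremum). -/
def H22 (L : LegendreFn X) (A : ∀ i, X →L[ℝ] Yf i) (AY : X →L[ℝ] Y) (C : Set X)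
    (hess : X → X →L[ℝ] X) (P : Measure Ω) (ξ : Ω → I) : Prop :=
  (∀ y ∈ interior L.domConj, HasFDerivAt L.gradConj (hess y) y) ∧
  ∀ x ∈ interior L.dom ∩ C,
    AY ∘L hess (L.grad x) ≠ 0 ∧
    ∃ M : ℝ, ∀ᵐ ω ∂P, ∀ G : Yf (ξ ω) →L[ℝ] Yf (ξ ω),
      IsMPInv (A (ξ ω) ∘L hess (L.grad x) ∘L ContinuousLinearMap.adjoint (A (ξ ω))) G →
      ‖ContinuousLinearMap.adjoint (A (ξ ω)) ∘L G ∘L A (ξ ω)‖ ≤ M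

/-- `Q̄(x) = E[Q_ξ(x)]` (Bochner expectation). -/
def Qbar (A : ∀ i, X →L[ℝ] Yf i) (Hrt : X → X →L[ℝ] X) (P : Measure Ω) (ξ : Ω → I) (x : X) :
    X →L[ℝ] X :=
  ∫ ω, Qproj A Hrt (ξ ω) x ∂P

/-- `γ_{𝒞,μ}(x) = inf_{v ∈ V(x) \ {0}} ⟪Q̄(x) v, v⟫ / ‖v‖²`. -/
def gammaCmu (A : ∀ i, X →L[ℝ] Yf i) (AY : X →L[ℝ] Y) (Hrt : X → X →L[ℝ] X)
    (P : Measure Ω) (ξ : Ω → I) (x : X) : ℝ :=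
  ⨅ v : {v : X // v ∈ Vsub AY Hrt x ∧ v ≠ 0},
    ⟪Qbar A Hrt P ξ x v.1, v.1⟫_ℝ / ‖v.1‖ ^ 2

/-- `σ_{𝒞,μ}(x)`, the stochastic contraction factor. -/
def sigmaCmu (L : LegendreFn X) (Cs : I → Set X) (C : Set X) (γ : X → ℝ)
    (P : Measure Ω) (ξ : Ω → I) (x : X) : ℝ :=
  if x ∈ C then 1 - γ x
  else ⨆ z : ↥(Kset L C x \ C),
    (∫ ω, L.distTo C (L.proj (Cs (ξ ω)) z) ∂P) / L.distTo C z

/-- `D̄_C(x) = E[D_{C_ξ}(x)]`. -/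
def DbarFn (L : LegendreFn X) (Cs : I → Set X) (P : Measure Ω) (ξ : Ω → I) (x : X) : ℝ :=
  ∫ ω, L.distTo (Cs (ξ ω)) x ∂P

end Stochastic


section Stmt0Helpers

variable {X : Type*} [NormedAddCommGroup X] [InnerProductSpace ℝ X] [FiniteDimensional ℝ X]

namespace LegendreFn

/-- Rewriting of the Bregman distance separating the `z`-dependent part. -/
theorem breg_eq' (L : LegendreFn X) (z y : X) :
    L.breg z y = (L.f z - ⟪L.grad y, z⟫_ℝ) + (⟪L.grad y, y⟫_ℝ - L.f y) := by
  simp only [LegendreFn.breg, inner_sub_left]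
  rw [real_inner_comm z (L.grad y), real_inner_comm y (L.grad y)]
  ring

/-- Three-point identity. -/
theorem breg_three (L : LegendreFn X) (z p x : X) :
    L.breg z x = L.breg z p + L.breg p x + (⟪L.grad p, z - p⟫_ℝ - ⟪L.grad x, z - p⟫_ℝ) := by
  simp only [LegendreFn.breg, inner_sub_left, inner_sub_right]
  rw [real_inner_comm (L.grad p) z, real_inner_comm (L.grad p) p,
    real_inner_comm (L.grad x) z, real_inner_comm (L.grad x) p]
  ring

/-- The line `t ↦ x + t • (z - x)` has derivative `z - x`. -/
theorem hasDerivAt_line (x z : X) (t : ℝ) :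
    HasDerivAt (fun t : ℝ => x + t • (z - x)) (z - x) t := by
  simpa using ((hasDerivAt_id t).smul_const (z - x)).const_add x

/-- Derivative of `t ↦ f (x + t • (z - x))` at `0`. -/
theorem hasDerivAt_comp_line (L : LegendreFn X) {x : X} (hx : x ∈ interior L.dom) (z : X) :
    HasDerivAt (fun t : ℝ => L.f (x + t • (z - x))) ⟪L.grad x, z - x⟫_ℝ 0 := by
  have hf : HasFDerivAt L.f (InnerProductSpace.toDual ℝ X (L.grad x)) x :=
    (L.hasGrad x hx).hasFDerivAt
  have hc : HasDerivAt (fun t : ℝ => x + t • (z - x)) (z - x) 0 := hasDerivAt_line x z 0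
  have hx0 : x = (fun t : ℝ => x + t • (z - x)) 0 := by simp
  rw [hx0] at hf
  have hfc := hf.comp_hasDerivAt 0 hc
  simp at hfc
  exact hfc

/-- Subgradient inequality at interior points. -/
theorem subgrad (L : LegendreFn X) {x z : X} (hx : x ∈ interior L.dom) (hz : z ∈ L.dom) :
    L.f x + ⟪L.grad x, z - x⟫_ℝ ≤ L.f z := by
  set h : ℝ → ℝ := fun t => L.f (x + t • (z - x)) with hh
  have hx' : x ∈ L.dom := interior_subset hx
  have hder : HasDerivAt h ⟪L.grad x, z - x⟫_ℝ 0 := L.hasDerivAt_comp_line hx z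
  have hslope : Tendsto (slope h 0) (𝓝[>] (0:ℝ)) (𝓝 ⟪L.grad x, z - x⟫_ℝ) :=
    (hasDerivAt_iff_tendsto_slope.mp hder).mono_left
      (nhdsWithin_mono 0 fun t ht => ne_of_gt ht)
  have hbound : ∀ᶠ t in 𝓝[>] (0:ℝ), slope h 0 t ≤ L.f z - L.f x := by
    filter_upwards [Ioo_mem_nhdsGT_of_mem (by constructor <;> norm_num :
      (0:ℝ) ∈ Ico (0:ℝ) 1)] with t ht
    have hcomb : x + t • (z - x) = (1 - t) • x + t • z := by
      rw [smul_sub, sub_smul, one_smul]; abel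
    have hcv := L.convexOn.2 hx' hz (by linarith [ht.2] : (0:ℝ) ≤ 1 - t)
      (le_of_lt ht.1) (by ring)
    rw [← hcomb] at hcv
    have h0 : h 0 = L.f x := by simp [hh]
    have : h t ≤ (1 - t) * L.f x + t * L.f z := by simpa [hh, smul_eq_mul] using hcv
    rw [slope_def_field, sub_zero, div_le_iff₀ ht.1]
    nlinarith [ht.1]
  have := le_of_tendsto hslope hbound
  linarith

/-- Strict convexity on the intersection of a convex set with the interior of the domain. -/
theorem strict_on_inter (L : LegendreFn X) {S : Set X} (hS : Convex ℝ S) :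
    StrictConvexOn ℝ (S ∩ interior L.dom) L.f := by
  refine L.strict _ ?_ (hS.inter L.dom_convex.interior)
  rintro y ⟨-, hy⟩
  exact ⟨interior_subset hy, L.grad y, fun z hz => L.subgrad hy hz⟩

/-- Uniqueness of Bregman projections onto convex sets. -/
theorem isBregProj_unique (L : LegendreFn X) {S : Set X} (hS : Convex ℝ S) {x p q : X}
    (hp : L.IsBregProj S x p) (hq : L.IsBregProj S x q) : p = q := by
  by_contra hne
  have hpd : p ∈ S ∩ L.dom := ⟨hp.1, interior_subset hp.2.1⟩
  have hqd : q ∈ S ∩ L.dom := ⟨hq.1, interior_subset hq.2.1⟩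
  have heq : L.breg p x = L.breg q x :=
    le_antisymm (hp.2.2 q hqd) (hq.2.2 p hpd)
  have hm : (1/2 : ℝ) • p + (1/2 : ℝ) • q ∈ S ∩ interior L.dom :=
    ⟨hS hp.1 hq.1 (by norm_num) (by norm_num) (by norm_num),
      L.dom_convex.interior hp.2.1 hq.2.1 (by norm_num) (by norm_num) (by norm_num)⟩
  have hstrict := (L.strict_on_inter hS).2 ⟨hp.1, hp.2.1⟩ ⟨hq.1, hq.2.1⟩ hne
    (by norm_num : (0:ℝ) < 1/2) (by norm_num : (0:ℝ) < 1/2) (by norm_num)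
  have hmin := hp.2.2 _ ⟨hm.1, interior_subset hm.2⟩
  have hlin : ⟪(1/2 : ℝ) • p + (1/2 : ℝ) • q - x, L.grad x⟫_ℝ
      = (1/2 : ℝ) * ⟪p - x, L.grad x⟫_ℝ + (1/2 : ℝ) * ⟪q - x, L.grad x⟫_ℝ := by
    simp only [inner_sub_left, inner_add_left, real_inner_smul_left]
    ring
  simp only [LegendreFn.breg] at heq hmin
  rw [hlin] at hmin
  simp only [smul_eq_mul] at hstrict
  linarith

/-- Existence of Bregman projections, in the `IsBregProj` formulation. -/
theorem exists_isBregProj (L : LegendreFn X) {S : Set X} (hScl : IsClosed S)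
    (hSconv : Convex ℝ S) (hSint : (S ∩ interior L.dom).Nonempty) {x : X}
    (hx : x ∈ interior L.dom) : ∃ p, L.IsBregProj S x p := by
  obtain ⟨p, ⟨hpS, hpint⟩, hmin⟩ := L.proj_exists S hScl hSconv hSint x hx
  refine ⟨p, hpS, hpint, fun z hz => ?_⟩
  have h := hmin z hz
  rw [real_inner_comm (L.grad x) p, real_inner_comm (L.grad x) z] at h
  rw [L.breg_eq' p x, L.breg_eq' z x]
  linarith

/-- If `p` is a Bregman projection of `x` onto a convex set `S`, then `L.proj S x = p`. -/
theorem proj_eq (L : LegendreFn X) {S : Set X} (hSconv : Convex ℝ S) {x p : X}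
    (hp : L.IsBregProj S x p) : L.proj S x = p := by
  have hspec : L.IsBregProj S x (L.proj S x) :=
    Classical.epsilon_spec (p := L.IsBregProj S x) ⟨p, hp⟩
  exact L.isBregProj_unique hSconv hspec hp

/-- The Bregman distance to `S` is attained at the Bregman projection. -/
theorem distTo_eq (L : LegendreFn X) {S : Set X} {x p : X} (hp : L.IsBregProj S x p) :
    L.distTo S x = L.breg p x := by
  refine IsLeast.csInf_eq ⟨⟨p, ⟨hp.1, interior_subset hp.2.1⟩, rfl⟩, ?_⟩
  rintro w ⟨z, hz, rfl⟩
  exact hp.2.2 z hz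

/-- Orthogonality relation for Bregman projections onto affine subspaces. -/
theorem proj_orth (L : LegendreFn X) {C : AffineSubspace ℝ X} {x p : X}
    (hp : L.IsBregProj (C : Set X) x p) {z : X} (hzC : z ∈ (C : Set X)) (hzd : z ∈ L.dom) :
    ⟪L.grad p, z - p⟫_ℝ - ⟪L.grad x, z - p⟫_ℝ = 0 := by
  set h : ℝ → ℝ := fun t => L.f (p + t • (z - p)) - ⟪L.grad x, p + t • (z - p)⟫_ℝ with hh
  have hder : HasDerivAt h (⟪L.grad p, z - p⟫_ℝ - ⟪L.grad x, z - p⟫_ℝ) 0 := by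
    have h1 : HasDerivAt (fun t : ℝ => L.f (p + t • (z - p))) ⟪L.grad p, z - p⟫_ℝ 0 :=
      L.hasDerivAt_comp_line hp.2.1 z
    have h2 : HasDerivAt (fun t : ℝ => ⟪L.grad x, p + t • (z - p)⟫_ℝ) ⟪L.grad x, z - p⟫_ℝ 0 := by
      have hc : HasDerivAt (fun t : ℝ => p + t • (z - p)) (z - p) 0 := hasDerivAt_line p z 0
      have hl : HasFDerivAt (fun w : X => ⟪L.grad x, w⟫_ℝ) (innerSL ℝ (L.grad x))
          ((fun t : ℝ => p + t • (z - p)) 0) := (innerSL ℝ (L.grad x)).hasFDerivAt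
      have hlc := hl.comp_hasDerivAt 0 hc
      simp at hlc
      exact hlc
    exact h1.sub h2
  have hmin : IsLocalMin h 0 := by
    have hUopen : IsOpen {t : ℝ | p + t • (z - p) ∈ interior L.dom} :=
      isOpen_interior.preimage (by continuity)
    have hU0 : (0:ℝ) ∈ {t : ℝ | p + t • (z - p) ∈ interior L.dom} := by
      simpa using hp.2.1
    filter_upwards [hUopen.mem_nhds hU0] with t ht
    have hcC : p + t • (z - p) ∈ (C : Set X) := by
      have := AffineMap.lineMap_mem (Q := C) t hp.1 hzC
      simpa [AffineMap.lineMap_apply_module', add_comm] using this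
    have hineq := hp.2.2 _ ⟨hcC, interior_subset ht⟩
    rw [L.breg_eq' p x, L.breg_eq' (p + t • (z - p)) x] at hineq
    simp only [hh]
    simpa using hineq
  exact hmin.hasDerivAt_eq_zero hder

/-- Additive decomposition of the Bregman distance through the projection. -/
theorem breg_decomp (L : LegendreFn X) {C : AffineSubspace ℝ X} {x p : X}
    (hp : L.IsBregProj (C : Set X) x p) {z : X} (hzC : z ∈ (C : Set X)) (hzd : z ∈ L.dom) :
    L.breg z x = L.breg z p + L.breg p x := by
  have := L.proj_orth hp hzC hzd
  rw [L.breg_three z p x, this, add_zero]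

end LegendreFn

end Stmt0Helpers

/-- If `C₁, C₂` are closed affine sets with `C₂ ⊆ C₁` and
`C₂ ∩ int (dom φ) ≠ ∅`, then for every `x ∈ int (dom φ)`,
`P_{C₂}(x) = P_{C₂}(P_{C₁}(x))` and `D_{C₂}(P_{C₁}(x)) + D_{C₁}(x) = D_{C₂}(x)`. -/
theorem stmt_0 {X : Type*} [NormedAddCommGroup X] [InnerProductSpace ℝ X]
    [FiniteDimensional ℝ X]
    (L : LegendreFn X) (C₁ C₂ : AffineSubspace ℝ X)
    (hcl₁ : IsClosed (C₁ : Set X)) (hcl₂ : IsClosed (C₂ : Set X))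
    (hsub : (C₂ : Set X) ⊆ (C₁ : Set X))
    (hint : ((C₂ : Set X) ∩ interior L.dom).Nonempty)
    (x : X) (hx : x ∈ interior L.dom) :
    L.proj (C₂ : Set X) x = L.proj (C₂ : Set X) (L.proj (C₁ : Set X) x) ∧
      L.distTo (C₂ : Set X) (L.proj (C₁ : Set X) x) + L.distTo (C₁ : Set X) x =
        L.distTo (C₂ : Set X) x := by
  have hconv₁ : Convex ℝ (C₁ : Set X) := C₁.convex
  have hconv₂ : Convex ℝ (C₂ : Set X) := C₂.convex
  have hint₁ : ((C₁ : Set X) ∩ interior L.dom).Nonempty :=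
    hint.mono (Set.inter_subset_inter_left _ hsub)
  -- the projection onto C₁
  obtain ⟨p₁, hp₁⟩ := L.exists_isBregProj hcl₁ hconv₁ hint₁ hx
  have hp₁eq : L.proj (C₁ : Set X) x = p₁ := L.proj_eq hconv₁ hp₁
  have hp₁int : p₁ ∈ interior L.dom := hp₁.2.1
  -- the projection of p₁ onto C₂
  obtain ⟨q, hq⟩ := L.exists_isBregProj hcl₂ hconv₂ hint hp₁int
  have hqeq : L.proj (C₂ : Set X) p₁ = q := L.proj_eq hconv₂ hq
  -- decomposition for points of C₂
  have hdec : ∀ z ∈ (C₂ : Set X) ∩ L.dom, L.breg z x = L.breg z p₁ + L.breg p₁ x :=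
    fun z hz => L.breg_decomp hp₁ (hsub hz.1) hz.2
  -- q is the Bregman projection of x onto C₂
  have hqx : L.IsBregProj (C₂ : Set X) x q := by
    refine ⟨hq.1, hq.2.1, fun z hz => ?_⟩
    have hqm : q ∈ (C₂ : Set X) ∩ L.dom := ⟨hq.1, interior_subset hq.2.1⟩
    rw [hdec q hqm, hdec z hz]
    have := hq.2.2 z hz
    linarith
  have hqxeq : L.proj (C₂ : Set X) x = q := L.proj_eq hconv₂ hqx
  constructor
  · rw [hp₁eq, hqeq, hqxeq]
  · rw [hp₁eq, L.distTo_eq hq, L.distTo_eq hp₁, L.distTo_eq hqx,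
      hdec q ⟨hq.1, interior_subset hq.2.1⟩]
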